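/- Let S, T be trees, A a subset of the stumps of S and B a subset of the stumps of T. A broad relation f_1⋯f_k ≤ e in S ⊗ T is a broad relation in (S − v_A) ⊗ (T − v_B) if and only if e^{λ,(S−v_A)⊗(T−v_B)} ≤ f_1⋯f_k, where e^{λ,(S−v_A)⊗(T−v_B)} is the minimal tuple below e in (S−v_A)⊗(T−v_B). -/
import Mathlib


universe u

namespace BroadPaper

/-- A broad relation on `X`: a relation between finite unordered tuples
(multisets) over `X` and elements of `X`. -/
abbrev Rel (X : Type u) : Type u := Multiset X → X → Prop

variable {X : Type u} {Y : Type u} {A : Type u} {B : Type u} {Z : Type u}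

/-- Broad transitivity: if `f₁ ⋯ fₙ ≤ e` and `g̲ᵢ ≤ fᵢ` then `g̲₁ ⋯ g̲ₙ ≤ e`,
encoded via a multiset of pairs `(g̲ᵢ, fᵢ)`. -/
def BTrans (r : Rel X) : Prop :=
  ∀ (p : Multiset (Multiset X × X)) (e : X),
    r (p.map Prod.snd) e → (∀ q ∈ p, r q.1 q.2) → r ((p.map Prod.fst).sum) e

/-- A pre-broad poset: reflexivity plus broad transitivity. -/
def IsPreBroad (r : Rel X) : Prop := (∀ e : X, r {e} e) ∧ BTrans r

/-- A (commutative) broad poset: a pre-broad poset satisfying antisymmetry. -/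
def IsBroad (r : Rel X) : Prop :=
  IsPreBroad r ∧ ∀ e f : X, r {e} f → r {f} e → e = f

/-- Simplicity: letters in any broad relation are pairwise distinct. -/
def Simple (r : Rel X) : Prop := ∀ fs e, r fs e → fs.Nodup

/-- The descendant relation `f ≤_d e`. -/
def descends (r : Rel X) (f e : X) : Prop := ∃ fs, r fs e ∧ f ∈ fs

def Comparable (r : Rel X) (f g : X) : Prop := descends r f g ∨ descends r g f

def Incomp (r : Rel X) (f g : X) : Prop := ¬ descends r f g ∧ ¬ descends r g f

/-- Blockwise extension of a broad relation to a relation between tuples: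
`fs ≤ es` iff `fs = f̲₁ ⋯ f̲ₖ`, `es = e₁ ⋯ eₖ` with `f̲ᵢ ≤ eᵢ`. -/
def tupleLE (r : Rel X) (fs es : Multiset X) : Prop :=
  ∃ p : Multiset (Multiset X × X),
    p.map Prod.snd = es ∧ (p.map Prod.fst).sum = fs ∧ ∀ q ∈ p, r q.1 q.2

/-- A leaf: no tuple strictly below `e`. -/
def IsLeaf (r : Rel X) (e : X) : Prop := ¬ ∃ fs, r fs e ∧ fs ≠ ({e} : Multiset X)

/-- `fs` is the maximum tuple strictly below `e` (written `e^↑`).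
If `fs ≠ 0`, `e` is a node; if `fs = 0`, `e` is a stump. -/
def upTuple (r : Rel X) (e : X) (fs : Multiset X) : Prop :=
  (r fs e ∧ fs ≠ ({e} : Multiset X)) ∧
    ∀ gs, r gs e → gs ≠ ({e} : Multiset X) → tupleLE r gs fs

def IsStump (r : Rel X) (e : X) : Prop := upTuple r e 0

/-- A dendroidally ordered set (tree): a finite simple broad poset in which
every element is a leaf, node or stump, with a `≤_d`-maximum (root). -/
def IsTree (r : Rel X) : Prop :=
  IsBroad r ∧ Finite X ∧ Simple r ∧
    (∀ e : X, IsLeaf r e ∨ ∃ fs, upTuple r e fs) ∧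
    ∃ rt : X, ∀ e, descends r e rt

def IsMaxEl (r : Rel X) (e : X) : Prop := ∀ s, descends r e s → s = e

/-- A forestially ordered set (forest): each element has a unique
`≤_d`-maximal element above it. -/
def IsForest (r : Rel X) : Prop :=
  IsBroad r ∧ Finite X ∧ Simple r ∧
    (∀ e : X, IsLeaf r e ∨ ∃ fs, upTuple r e fs) ∧
    ∀ e : X, ∃! rt : X, IsMaxEl r rt ∧ descends r e rt

/-- A map of broad posets: preserves broad relations (letterwise on tuples). -/
def BroadHom (r : Rel X) (r' : Rel Y) (φ : X → Y) : Prop :=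
  ∀ fs e, r fs e → r' (fs.map φ) (φ e)

/-- `rs` is the root tuple: the tuple of `≤_d`-maximal elements (no repeats). -/
def IsRootTuple (r : Rel X) (rs : Multiset X) : Prop :=
  rs.Nodup ∧ ∀ x, x ∈ rs ↔ IsMaxEl r x

/-- Independent map of forests: `φ(r̲_F)·e̲ ≤ r̲_{F'}` for some tuple `e̲`. -/
def Independent (r : Rel X) (r' : Rel Y) (φ : X → Y) : Prop :=
  ∃ (rs : Multiset X) (rs' : Multiset Y) (es : Multiset Y),
    IsRootTuple r rs ∧ IsRootTuple r' rs' ∧ tupleLE r' (rs.map φ + es) rs'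

/-- The (pre-)broad relation generated by a set of generating relations:
closure under reflexivity and broad transitivity. -/
inductive GenRel (gen : Rel X) : Rel X
  | of : ∀ fs e, gen fs e → GenRel gen fs e
  | refl : ∀ e, GenRel gen {e} e
  | btrans : ∀ (p : Multiset (Multiset X × X)) (e : X),
      GenRel gen (p.map Prod.snd) e → (∀ q ∈ p, GenRel gen q.1 q.2) →
      GenRel gen ((p.map Prod.fst).sum) e

/-- Generators of the tensor product `S ⊗ T`: relations `s̲ × t ≤ (s,t)` and
`s × t̲ ≤ (s,t)`. -/
def tensorGen (rS : Rel A) (rT : Rel B) : Rel (A × B) := fun xs x =>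
  (∃ as, rS as x.1 ∧ xs = as.map fun a => (a, x.2)) ∨
  (∃ bs, rT bs x.2 ∧ xs = bs.map fun b => (x.1, b))

/-- The tensor product broad relation on `A × B`. -/
def tensorRel (rS : Rel A) (rT : Rel B) : Rel (A × B) := GenRel (tensorGen rS rT)

/-- Product of tuples: all pairs from `as` and `bs`. -/
def mprod (as : Multiset A) (bs : Multiset B) : Multiset (A × B) :=
  as.bind fun a => bs.map fun b => (a, b)

end BroadPaper

namespace BroadPaper

/-- `S − v_A`: same edges as `S`, generated by the vertices of `S` with the
stump vertices `ε ≤ a`, `a ∈ A`, removed. -/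
def delStumps {X : Type u} (r : Rel X) (As : Set X) : Rel X :=
  GenRel fun fs e => upTuple r e fs ∧ ¬ (e ∈ As ∧ fs = 0)

/-! ### Auxiliary material for Statement 18 -/

section Stmt18Aux

open Multiset

variable {X : Type u}

/-- Mapping over a sum of multisets. -/
theorem map_msum {α β : Type u} (f : α → β) (s : Multiset (Multiset α)) :
    s.sum.map f = (s.map (Multiset.map f)).sum := by
  induction s using Multiset.induction with
  | empty => simp
  | cons a s ih => simp [ih]

theorem mem_msum {α : Type u} {x : α} {s : Multiset (Multiset α)} :
    x ∈ s.sum ↔ ∃ t ∈ s, x ∈ t := by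
  induction s using Multiset.induction with
  | empty => simp
  | cons a s ih =>
    simp only [Multiset.sum_cons, Multiset.mem_add, ih, Multiset.mem_cons]
    constructor
    · rintro (h | ⟨t, ht, hx⟩)
      · exact ⟨a, Or.inl rfl, h⟩
      · exact ⟨t, Or.inr ht, hx⟩
    · rintro ⟨t, (rfl | ht), hx⟩
      · exact Or.inl hx
      · exact Or.inr ⟨t, ht, hx⟩

/-- Sum over a "flattened" multiset. -/
theorem sum_map_msum {α β : Type u} (p : Multiset (Multiset α)) (f : α → Multiset β) :
    (p.sum.map f).sum = (p.map (fun s => (s.map f).sum)).sum := by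
  induction p using Multiset.induction with
  | empty => simp
  | cons a p ih => simp [Multiset.map_add, ih]

theorem sum_map_le_sum_map {α β : Type u} (p : Multiset α) (f g : α → Multiset β)
    (h : ∀ x ∈ p, f x ≤ g x) : (p.map f).sum ≤ (p.map g).sum := by
  induction p using Multiset.induction with
  | empty => simp
  | cons a p ih =>
    simp only [Multiset.map_cons, Multiset.sum_cons]
    exact add_le_add (h a (Multiset.mem_cons_self a p))
      (ih fun x hx => h x (Multiset.mem_cons_of_mem hx))

/-- If a sum of pointwise-`≤` terms has equal total, the terms are equal. -/
theorem eq_of_sum_map_eq {α β : Type u} {p : Multiset α} {f g : α → Multiset β}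
    (hle : ∀ x ∈ p, f x ≤ g x) (hsum : (p.map f).sum = (p.map g).sum) :
    ∀ x ∈ p, f x = g x := by
  induction p using Multiset.induction with
  | empty => simp
  | cons a p ih =>
    have h1 : f a ≤ g a := hle a (Multiset.mem_cons_self a p)
    have h2 : (p.map f).sum ≤ (p.map g).sum :=
      sum_map_le_sum_map p f g fun x hx => hle x (Multiset.mem_cons_of_mem hx)
    obtain ⟨c, hc⟩ := Multiset.le_iff_exists_add.mp h1
    obtain ⟨d, hd⟩ := Multiset.le_iff_exists_add.mp h2
    simp only [Multiset.map_cons, Multiset.sum_cons] at hsum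
    rw [hc, hd] at hsum
    have hcd : c + d = 0 := by
      have h' : (f a + (p.map f).sum) + (c + d) = (f a + (p.map f).sum) + 0 := by
        conv_rhs => rw [add_zero, hsum]
        abel
      exact add_left_cancel h'
    have hc0 : c = 0 := by
      have hle' : c ≤ c + d := le_add_right c d
      rw [hcd] at hle'
      exact Multiset.le_zero.mp hle'
    have hd0 : d = 0 := by
      have hle' : d ≤ c + d := le_add_left d c
      rw [hcd] at hle'
      exact Multiset.le_zero.mp hle'
    intro x hx
    rcases Multiset.mem_cons.mp hx with rfl | hx'
    · rw [hc, hc0, add_zero]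
    · exact ih (fun y hy => hle y (Multiset.mem_cons_of_mem hy))
        (by rw [hd, hd0, add_zero]) x hx'

theorem genRel_mono {g g' : Rel X} (h : ∀ fs e, g fs e → g' fs e) :
    ∀ {fs e}, GenRel g fs e → GenRel g' fs e := by
  intro fs e hd
  induction hd with
  | of fs e h' => exact GenRel.of _ _ (h _ _ h')
  | refl e => exact GenRel.refl e
  | btrans p e hmid hblocks ihmid ihblocks => exact GenRel.btrans p e ihmid ihblocks

section TreeLemmas

variable [DecidableEq X] {r : Rel X} (hS : IsTree r)
include hS

theorem tree_refl (e : X) : r {e} e := hS.1.1.1 e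

theorem tree_btrans : BTrans r := hS.1.1.2

theorem tree_simple : Simple r := hS.2.2.1

/-- Substituting one letter of a relation by a tuple below it. -/
theorem subst_one {xs ys : Multiset X} {y z : X} (hxy : r xs y) (hyz : r ys z)
    (hy : y ∈ ys) : r (xs + ys.erase y) z := by
  have hsnd : (((xs, y) ::ₘ (ys.erase y).map fun w => (({w} : Multiset X), w)).map
      Prod.snd) = ys := by
    rw [Multiset.map_cons, Multiset.map_map]
    have : ((ys.erase y).map (Prod.snd ∘ fun w => (({w} : Multiset X), w))) = ys.erase y :=
      Multiset.map_id' _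
    rw [this]
    exact Multiset.cons_erase hy
  have hfst : ((((xs, y) ::ₘ (ys.erase y).map fun w => (({w} : Multiset X), w)).map
      Prod.fst).sum) = xs + ys.erase y := by
    rw [Multiset.map_cons, Multiset.sum_cons, Multiset.map_map]
    congr 1
    exact Multiset.sum_map_singleton _
  have h := tree_btrans hS ((xs, y) ::ₘ (ys.erase y).map fun w => (({w} : Multiset X), w)) z
    (by rw [hsnd]; exact hyz) ?_
  · rwa [hfst] at h
  · intro q hq
    rcases Multiset.mem_cons.mp hq with rfl | hq'
    · exact hxy
    · obtain ⟨w, _, rfl⟩ := Multiset.mem_map.mp hq'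
      exact tree_refl hS w

/-- Substituting two distinct letters simultaneously. -/
theorem subst_two {zs zs' bs : Multiset X} {x x' u : X} (h1 : r zs x) (h2 : r zs' x')
    (hb : r bs u) (hx : x ∈ bs) (hx' : x' ∈ bs.erase x) :
    r (zs + (zs' + ((bs.erase x).erase x'))) u := by
  set rest : Multiset X := (bs.erase x).erase x' with hrest
  have hsnd : (((zs, x) ::ₘ (zs', x') ::ₘ rest.map fun w => (({w} : Multiset X), w)).map
      Prod.snd) = bs := by
    rw [Multiset.map_cons, Multiset.map_cons, Multiset.map_map]
    have : (rest.map (Prod.snd ∘ fun w => (({w} : Multiset X), w))) = rest :=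
      Multiset.map_id' _
    rw [this, hrest, Multiset.cons_erase hx', Multiset.cons_erase hx]
  have hfst : ((((zs, x) ::ₘ (zs', x') ::ₘ rest.map fun w => (({w} : Multiset X), w)).map
      Prod.fst).sum) = zs + (zs' + rest) := by
    rw [Multiset.map_cons, Multiset.map_cons, Multiset.sum_cons, Multiset.sum_cons,
      Multiset.map_map]
    congr 2
    exact Multiset.sum_map_singleton _
  have h := tree_btrans hS ((zs, x) ::ₘ (zs', x') ::ₘ rest.map fun w => (({w} : Multiset X), w))
    u (by rw [hsnd]; exact hb) ?_
  · rwa [hfst] at h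
  · intro q hq
    rcases Multiset.mem_cons.mp hq with rfl | hq'
    · exact h1
    · rcases Multiset.mem_cons.mp hq' with rfl | hq''
      · exact h2
      · obtain ⟨w, _, rfl⟩ := Multiset.mem_map.mp hq''
        exact tree_refl hS w

/-- In a simple broad poset, a tuple below `a` containing `a` is `{a}`. -/
theorem eq_singleton_of_mem {ys : Multiset X} {a : X} (h : r ys a) (ha : a ∈ ys) :
    ys = {a} := by
  by_contra hne
  have h2 : r (ys + ys.erase a) a := subst_one hS h h ha
  have hnd := tree_simple hS _ _ h2
  have hzero : ys.erase a ≠ 0 := by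
    intro h0
    apply hne
    have hce := Multiset.cons_erase ha
    rw [h0] at hce
    exact hce.symm
  obtain ⟨w, hw⟩ := Multiset.exists_mem_of_ne_zero hzero
  have hw2 : w ∈ ys := Multiset.mem_of_mem_erase hw
  obtain ⟨-, -, hdisj⟩ := Multiset.nodup_add.mp hnd
  exact Multiset.disjoint_left.mp hdisj hw2 hw

theorem descends_refl (e : X) : descends r e e :=
  ⟨{e}, tree_refl hS e, Multiset.mem_singleton_self e⟩

theorem descends_trans {x y z : X} (h1 : descends r x y) (h2 : descends r y z) :
    descends r x z := by
  obtain ⟨xs, hxs, hx⟩ := h1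
  obtain ⟨ys, hys, hy⟩ := h2
  exact ⟨xs + ys.erase y, subst_one hS hxs hys hy, Multiset.mem_add.mpr (Or.inl hx)⟩

theorem descends_antisymm {x u : X} (h1 : descends r x u) (h2 : descends r u x) :
    x = u := by
  obtain ⟨xs, hxs, hx⟩ := h1
  obtain ⟨us, hus, hu⟩ := h2
  have h3 : r (us + xs.erase x) u := subst_one hS hus hxs hx
  have h4 : us + xs.erase x = {u} :=
    eq_singleton_of_mem hS h3 (Multiset.mem_add.mpr (Or.inl hu))
  have hus' : us = {u} := by
    have hle : us ≤ ({u} : Multiset X) := h4 ▸ le_add_right us (xs.erase x)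
    rcases Multiset.le_singleton.mp hle with h0 | h
    · rw [h0] at hu; simp at hu
    · exact h
  have herase : xs.erase x = 0 := by
    rw [hus'] at h4
    have : ({u} : Multiset X) + xs.erase x = {u} + 0 := by rw [h4, add_zero]
    exact add_left_cancel this
  have hxs' : xs = {x} := by
    have hce := Multiset.cons_erase hx
    rw [herase] at hce
    exact hce.symm
  rw [hxs'] at hxs
  rw [hus'] at hus
  exact (hS.1.2 u x hus hxs).symm

/-- Two distinct letters of a relation have no common descendant. -/
theorem disjoint_descends {bs : Multiset X} {u x x' z : X} (hb : r bs u)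
    (hx : x ∈ bs) (hx' : x' ∈ bs) (hne : x ≠ x')
    (h1 : descends r z x) (h2 : descends r z x') : False := by
  obtain ⟨zs, hzs, hz⟩ := h1
  obtain ⟨zs', hzs', hz'⟩ := h2
  have hx'' : x' ∈ bs.erase x := (Multiset.mem_erase_of_ne (Ne.symm hne)).mpr hx'
  have h3 := subst_two hS hzs hzs' hb hx hx''
  have hnd := tree_simple hS _ _ h3
  classical
  have hle := Multiset.nodup_iff_count_le_one.mp hnd z
  rw [Multiset.count_add, Multiset.count_add] at hle
  have c1 := Multiset.one_le_count_iff_mem.mpr hz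
  have c2 := Multiset.one_le_count_iff_mem.mpr hz'
  omega

theorem upTuple_unique {a : X} {fs fs' : Multiset X} (h : upTuple r a fs)
    (h' : upTuple r a fs') : fs = fs' := by
  have key : ∀ gs gs' : Multiset X, upTuple r a gs → upTuple r a gs' →
      ∀ x ∈ gs, x ∈ gs' := by
    intro gs gs' hg hg' x hx
    obtain ⟨p, hsnd, hfst, hblocks⟩ := hg'.2 gs hg.1.1 hg.1.2
    rw [← hfst] at hx
    obtain ⟨t, ht, hxt⟩ := mem_msum.mp hx
    obtain ⟨q, hq, rfl⟩ := Multiset.mem_map.mp ht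
    have hxy : descends r x q.2 := ⟨q.1, hblocks q hq, hxt⟩
    have hy : q.2 ∈ gs' := hsnd ▸ Multiset.mem_map_of_mem Prod.snd hq
    obtain ⟨p', hsnd', hfst', hblocks'⟩ := hg.2 gs' hg'.1.1 hg'.1.2
    have hy2 : q.2 ∈ (p'.map Prod.fst).sum := hfst' ▸ hy
    obtain ⟨t', ht', hyt'⟩ := mem_msum.mp hy2
    obtain ⟨q', hq', rfl⟩ := Multiset.mem_map.mp ht'
    have hyx'' : descends r q.2 q'.2 := ⟨q'.1, hblocks' q' hq', hyt'⟩
    have hx'' : q'.2 ∈ gs := hsnd' ▸ Multiset.mem_map_of_mem Prod.snd hq'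
    have hx0 : x ∈ gs := hfst ▸ hx
    have hxeq : x = q'.2 := by
      by_contra hne
      exact disjoint_descends hS hg.1.1 hx0 hx'' hne (descends_refl hS x)
        (descends_trans hS hxy hyx'')
    have : x = q.2 := descends_antisymm hS hxy (hxeq ▸ hyx'')
    rw [this]; exact hy
  have nd := tree_simple hS _ _ h.1.1
  have nd' := tree_simple hS _ _ h'.1.1
  rw [Multiset.Nodup.ext nd nd']
  intro x
  exact ⟨key fs fs' h h' x, key fs' fs h' h x⟩

/-- Number of descendants: a well-founded measure on a tree. -/
noncomputable def mval (r : Rel X) (a : X) : ℕ := Set.ncard {x | descends r x a}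

theorem mval_lt {a u : X} {fs : Multiset X} (hup : upTuple r a fs) (hu : u ∈ fs) :
    mval r u < mval r a := by
  have hfin : Finite X := hS.2.1
  have hdu : descends r u a := ⟨fs, hup.1.1, hu⟩
  have hsub : {x | descends r x u} ⊂ {x | descends r x a} := by
    rw [Set.ssubset_iff_subset_ne]
    constructor
    · intro z hz
      exact descends_trans hS hz hdu
    · intro hcon
      have hau : descends r a u := by
        have : a ∈ {x | descends r x u} := by
          rw [hcon]; exact descends_refl hS a
        exact this
      have heq : a = u := descends_antisymm hS hau hdu
      subst heq
      exact hup.1.2 (eq_singleton_of_mem hS hup.1.1 hu)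
  exact Set.ncard_lt_ncard hsub (Set.toFinite _)

end TreeLemmas

open Classical in
/-- Approximations to the leaf tuple of `S − v_A` below `a`. -/
noncomputable def lsAux (r : Rel X) (As : Set X) : ℕ → X → Multiset X
  | 0, a => {a}
  | n+1, a =>
    if h : ∃ fs, upTuple r a fs ∧ ¬ (a ∈ As ∧ fs = 0) then
      ((h.choose).map (lsAux r As n)).sum
    else {a}

/-- The leaf tuple of `S − v_A` below `a`. -/
noncomputable def lseaf (r : Rel X) (As : Set X) (a : X) : Multiset X :=
  lsAux r As (mval r a + 1) a

section TreeLemmas2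

variable {r : Rel X} (hS : IsTree r) {As : Set X}
include hS

theorem lsAux_stab : ∀ k a, mval r a < k → ∀ n₁ n₂, mval r a < n₁ → mval r a < n₂ →
    lsAux r As n₁ a = lsAux r As n₂ a := by
  intro k
  induction k with
  | zero => intro a h; omega
  | succ K ih =>
    intro a hk n₁ n₂ h1 h2
    obtain ⟨m₁, rfl⟩ : ∃ m, n₁ = m + 1 := ⟨n₁ - 1, by omega⟩
    obtain ⟨m₂, rfl⟩ : ∃ m, n₂ = m + 1 := ⟨n₂ - 1, by omega⟩
    by_cases h : ∃ fs, upTuple r a fs ∧ ¬ (a ∈ As ∧ fs = 0)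
    · rw [lsAux, dif_pos h, lsAux, dif_pos h]
      congr 1
      apply Multiset.map_congr rfl
      intro u hu
      have hlt : mval r u < mval r a := by
        classical
        exact mval_lt hS h.choose_spec.1 hu
      exact ih u (by omega) m₁ m₂ (by omega) (by omega)
    · rw [lsAux, dif_neg h, lsAux, dif_neg h]

theorem lseaf_node {a : X} {fs : Multiset X} (hup : upTuple r a fs)
    (hcond : ¬ (a ∈ As ∧ fs = 0)) :
    lseaf r As a = (fs.map (lseaf r As)).sum := by
  classical
  have h : ∃ fs, upTuple r a fs ∧ ¬ (a ∈ As ∧ fs = 0) := ⟨fs, hup, hcond⟩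
  have hch : h.choose = fs := upTuple_unique hS h.choose_spec.1 hup
  rw [lseaf, lsAux, dif_pos h, hch]
  congr 1
  apply Multiset.map_congr rfl
  intro u hu
  have hlt : mval r u < mval r a := mval_lt hS hup hu
  exact lsAux_stab hS (mval r u + 1) u (by omega) (mval r a) (mval r u + 1)
    (by omega) (by omega)

omit hS in
theorem lseaf_base {a : X} (hno : ¬ ∃ fs, upTuple r a fs ∧ ¬ (a ∈ As ∧ fs = 0)) :
    lseaf r As a = {a} := by
  rw [lseaf, lsAux, dif_neg hno]

theorem lseaf_stump {a : X} (hup : upTuple r a 0) (ha : a ∈ As) :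
    lseaf r As a = {a} := by
  apply lseaf_base
  rintro ⟨fs, hfs, hc⟩
  classical
  exact hc ⟨ha, upTuple_unique hS hfs hup⟩

/-- `lseaf a ≤ a` in `S − v_A`. -/
theorem delStumps_lseaf : ∀ a, delStumps r As (lseaf r As a) a := by
  have H : ∀ n a, mval r a < n → delStumps r As (lseaf r As a) a := by
    intro n
    induction n with
    | zero => intro a h; omega
    | succ N ih =>
      intro a ha
      by_cases h : ∃ fs, upTuple r a fs ∧ ¬ (a ∈ As ∧ fs = 0)
      · obtain ⟨fs, hup, hcond⟩ := h
        rw [lseaf_node hS hup hcond]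
        have hbase : delStumps r As fs a := GenRel.of _ _ ⟨hup, hcond⟩
        have hb := GenRel.btrans (gen := fun fs e => upTuple r e fs ∧ ¬ (e ∈ As ∧ fs = 0))
          (fs.map fun u => (lseaf r As u, u)) a ?_ ?_
        · rwa [Multiset.map_map, show ((fun q : Multiset X × X => q.1) ∘
            fun u => (lseaf r As u, u)) = lseaf r As from rfl] at hb
        · rwa [Multiset.map_map, show (Prod.snd ∘ fun u => (lseaf r As u, u)) =
            fun u => u from rfl, Multiset.map_id']
        · intro q hq
          obtain ⟨u, hu, rfl⟩ := Multiset.mem_map.mp hq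
          classical
          exact ih u (by have := mval_lt hS hup hu; omega)
      · rw [lseaf_base h]
        exact GenRel.refl a

  intro a
  exact H (mval r a + 1) a (by omega)

/-- Monotonicity: for any relation `gs ≤ a` in the tree,
the leaf tuples of `gs` are contained in the leaf tuple of `a`. -/
theorem sum_lseaf_le : ∀ n a, mval r a < n → ∀ gs, r gs a →
    (gs.map (lseaf r As)).sum ≤ lseaf r As a := by
  intro n
  induction n with
  | zero => intro a h; omega
  | succ N ih =>
    intro a ha gs hg
    by_cases hgs : gs = {a}
    · subst hgs; simp
    · rcases hS.2.2.2.1 a with hleaf | ⟨fs, hup⟩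
      · exact absurd ⟨gs, hg, hgs⟩ hleaf
      · obtain ⟨p, hsnd, hfst, hblocks⟩ := hup.2 gs hg hgs
        by_cases hstump : fs = 0
        · have hp0 : p = 0 := by
            rw [hstump] at hsnd
            exact Multiset.eq_zero_of_forall_notMem fun q hq => by
              have := Multiset.mem_map_of_mem Prod.snd hq
              rw [hsnd] at this; simp at this
          rw [hp0] at hfst
          simp at hfst
          rw [← hfst]
          simp
        · have hcond : ¬ (a ∈ As ∧ fs = 0) := fun hc => hstump hc.2
          rw [← hfst, sum_map_msum, Multiset.map_map]
          have hle : ((p.map fun q => ((q.1.map (lseaf r As)).sum)).sum ≤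
              (p.map fun q => lseaf r As q.2).sum) := by
            apply sum_map_le_sum_map
            intro q hq
            classical
            have hq2 : q.2 ∈ fs := hsnd ▸ Multiset.mem_map_of_mem Prod.snd hq
            exact ih q.2 (by have := mval_lt hS hup hq2; omega) q.1 (hblocks q hq)
          refine le_trans (le_of_eq ?_) (le_trans hle (le_of_eq ?_))
          · rfl
          · rw [show (fun q : Multiset X × X => lseaf r As q.2) =
              (lseaf r As) ∘ Prod.snd from rfl, ← Multiset.map_map, hsnd,
              ← lseaf_node hS hup hcond]

/-- Additivity of leaf tuples along relations of `S − v_A`. -/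
theorem sum_lseaf_eq {gs : Multiset X} {a : X} (h : delStumps r As gs a) :
    (gs.map (lseaf r As)).sum = lseaf r As a := by
  induction h with
  | of fs e hgen => exact (lseaf_node hS hgen.1 hgen.2).symm
  | refl e => simp
  | btrans p e hmid hblocks ihmid ihblocks =>
    rw [sum_map_msum, Multiset.map_map]
    rw [show ((fun s => (Multiset.map (lseaf r As) s).sum) ∘ Prod.fst) =
      (fun q : Multiset X × X => ((q.1.map (lseaf r As)).sum)) from rfl]
    rw [Multiset.map_congr rfl fun q hq => ihblocks q hq]
    rw [show (fun q : Multiset X × X => lseaf r As q.2) =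
      (lseaf r As) ∘ Prod.snd from rfl, ← Multiset.map_map]
    exact ihmid

/-- Key tree-level converse: a tree relation whose leaf tuples add up
correctly already holds in `S − v_A`. -/
theorem del_of_sum_eq : ∀ n a, mval r a < n → ∀ gs, r gs a →
    (gs.map (lseaf r As)).sum = lseaf r As a → delStumps r As gs a := by
  intro n
  induction n with
  | zero => intro a h; omega
  | succ N ih =>
    intro a ha gs hg heq
    by_cases hgs : gs = {a}
    · subst hgs; exact GenRel.refl a
    · rcases hS.2.2.2.1 a with hleaf | ⟨fs, hup⟩
      · exact absurd ⟨gs, hg, hgs⟩ hleaf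
      · obtain ⟨p, hsnd, hfst, hblocks⟩ := hup.2 gs hg hgs
        by_cases hc : a ∈ As ∧ fs = 0
        · exfalso
          have hp0 : p = 0 := by
            rw [hc.2] at hsnd
            exact Multiset.eq_zero_of_forall_notMem fun q hq => by
              have := Multiset.mem_map_of_mem Prod.snd hq
              rw [hsnd] at this; simp at this
          rw [hp0] at hfst
          simp at hfst
          rw [← hfst] at heq
          rw [lseaf_stump hS (hc.2 ▸ hup) hc.1] at heq
          simp at heq
        · have hbase : delStumps r As fs a := GenRel.of _ _ ⟨hup, hc⟩
          have hLa : lseaf r As a = (fs.map (lseaf r As)).sum := lseaf_node hS hup hc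
          have hsum : (p.map fun q : Multiset X × X => ((q.1.map (lseaf r As)).sum)).sum
              = (p.map fun q : Multiset X × X => lseaf r As q.2).sum := by
            have e1 : (p.map fun q : Multiset X × X => ((q.1.map (lseaf r As)).sum)).sum
                = (gs.map (lseaf r As)).sum := by
              rw [← hfst, sum_map_msum, Multiset.map_map]; rfl
            have e2 : (p.map fun q : Multiset X × X => lseaf r As q.2).sum
                = (fs.map (lseaf r As)).sum := by
              rw [show (fun q : Multiset X × X => lseaf r As q.2) =
                (lseaf r As) ∘ Prod.snd from rfl, ← Multiset.map_map, hsnd]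
            rw [e1, e2, heq, hLa]
          have hpt := eq_of_sum_map_eq (p := p)
            (f := fun q : Multiset X × X => ((q.1.map (lseaf r As)).sum))
            (g := fun q : Multiset X × X => lseaf r As q.2)
            (fun q hq => by
              classical
              have hq2 : q.2 ∈ fs := hsnd ▸ Multiset.mem_map_of_mem Prod.snd hq
              exact sum_lseaf_le hS (mval r q.2 + 1) q.2 (by omega) q.1 (hblocks q hq))
            hsum
          have hdel : ∀ q ∈ p, delStumps r As q.1 q.2 := by
            intro q hq
            classical
            have hq2 : q.2 ∈ fs := hsnd ▸ Multiset.mem_map_of_mem Prod.snd hq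
            exact ih q.2 (by have := mval_lt hS hup hq2; omega) q.1 (hblocks q hq)
              (hpt q hq)
          have hb := GenRel.btrans (gen := fun fs e => upTuple r e fs ∧ ¬ (e ∈ As ∧ fs = 0))
            p a (by rw [hsnd]; exact hbase) hdel
          rwa [hfst] at hb

end TreeLemmas2

section MprodLemmas

variable {A B : Type u}

theorem mprod_zero_left (t : Multiset B) : mprod (0 : Multiset A) t = 0 :=
  Multiset.zero_bind _

theorem mprod_cons_left (a : A) (s : Multiset A) (t : Multiset B) :
    mprod (a ::ₘ s) t = (t.map fun b => (a, b)) + mprod s t :=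
  Multiset.cons_bind _ _ _

theorem mprod_add_left (s s' : Multiset A) (t : Multiset B) :
    mprod (s + s') t = mprod s t + mprod s' t :=
  Multiset.add_bind _ _ _

theorem mprod_zero_right (s : Multiset A) : mprod s (0 : Multiset B) = 0 := by
  simp [mprod]

theorem mprod_add_right (s : Multiset A) (t t' : Multiset B) :
    mprod s (t + t') = mprod s t + mprod s t' := by
  simp [mprod, Multiset.map_add, Multiset.bind_add]

theorem mprod_sum_left (P : Multiset (Multiset A)) (t : Multiset B) :
    mprod P.sum t = (P.map fun s => mprod s t).sum := by
  induction P using Multiset.induction with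
  | empty => simp [mprod_zero_left]
  | cons s P ih => simp [mprod_add_left, ih]

theorem mprod_sum_right (s : Multiset A) (P : Multiset (Multiset B)) :
    mprod s P.sum = (P.map fun t => mprod s t).sum := by
  induction P using Multiset.induction with
  | empty => simp [mprod_zero_right]
  | cons t P ih => simp [mprod_add_right, ih]

theorem mprod_le_left {s s' : Multiset A} (t : Multiset B) (h : s ≤ s') :
    mprod s t ≤ mprod s' t := by
  obtain ⟨d, rfl⟩ := Multiset.le_iff_exists_add.mp h
  rw [mprod_add_left]
  exact le_add_right _ _

theorem mprod_le_right (s : Multiset A) {t t' : Multiset B} (h : t ≤ t') :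
    mprod s t ≤ mprod s t' := by
  obtain ⟨d, rfl⟩ := Multiset.le_iff_exists_add.mp h
  rw [mprod_add_right]
  exact le_add_right _ _

theorem count_mprod [DecidableEq A] [DecidableEq B] (s : Multiset A) (t : Multiset B)
    (x : A) (y : B) :
    Multiset.count (x, y) (mprod s t) = Multiset.count x s * Multiset.count y t := by
  induction s using Multiset.induction with
  | empty => simp [mprod_zero_left]
  | cons a s ih =>
    rw [mprod_cons_left, Multiset.count_add, ih, Multiset.count_cons]
    by_cases hax : x = a
    · subst hax
      have hinj : Function.Injective (fun b : B => (x, b)) := fun b b' h => by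
        simpa using congrArg Prod.snd h
      have : Multiset.count (x, y) (t.map fun b => (x, b)) = Multiset.count y t :=
        Multiset.count_map_eq_count' _ _ hinj y
      rw [this]
      simp
      ring
    · have : Multiset.count (x, y) (t.map fun b => (a, b)) = 0 := by
        rw [Multiset.count_eq_zero]
        intro hmem
        obtain ⟨b, _, hb⟩ := Multiset.mem_map.mp hmem
        exact hax (congrArg Prod.fst hb).symm
      rw [this]
      simp [hax]

theorem mprod_cancel_left {s s' : Multiset A} {t : Multiset B} (ht : t ≠ 0)
    (h : mprod s t = mprod s' t) : s = s' := by
  classical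
  obtain ⟨y, hy⟩ := Multiset.exists_mem_of_ne_zero ht
  rw [Multiset.ext]
  intro x
  have hcc := congrArg (Multiset.count (x, y)) h
  rw [count_mprod, count_mprod] at hcc
  have hy' : 0 < Multiset.count y t := Multiset.count_pos.mpr hy
  exact Nat.eq_of_mul_eq_mul_right hy' hcc

theorem mprod_cancel_right {s : Multiset A} {t t' : Multiset B} (hs : s ≠ 0)
    (h : mprod s t = mprod s t') : t = t' := by
  classical
  obtain ⟨x, hx⟩ := Multiset.exists_mem_of_ne_zero hs
  rw [Multiset.ext]
  intro y
  have hcc := congrArg (Multiset.count (x, y)) h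
  rw [count_mprod, count_mprod] at hcc
  have hx' : 0 < Multiset.count x s := Multiset.count_pos.mpr hx
  exact Nat.eq_of_mul_eq_mul_left hx' hcc

end MprodLemmas

section TensorLemmas

variable {A B : Type u}

/-- The leaf tuple of `(S − v_A) ⊗ (T − v_B)` below `(a, b)`. -/
noncomputable def lamT (rS : Rel A) (rT : Rel B) (As : Set A) (Bs : Set B)
    (x : A × B) : Multiset (A × B) :=
  mprod (lseaf rS As x.1) (lseaf rT Bs x.2)

variable {rS : Rel A} {rT : Rel B} {As : Set A} {Bs : Set B}

theorem sum_lam_map_left (as : Multiset A) (b : B) :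
    (((as.map fun a' => (a', b)).map (lamT rS rT As Bs)).sum)
      = mprod ((as.map (lseaf rS As)).sum) (lseaf rT Bs b) := by
  rw [Multiset.map_map, mprod_sum_left, Multiset.map_map]
  rfl

theorem sum_lam_map_right (bs : Multiset B) (a : A) :
    (((bs.map fun b' => (a, b')).map (lamT rS rT As Bs)).sum)
      = mprod (lseaf rS As a) ((bs.map (lseaf rT Bs)).sum) := by
  rw [Multiset.map_map, mprod_sum_right, Multiset.map_map]
  rfl

variable (hSt : IsTree rS) (hTt : IsTree rT)
include hSt hTt

/-- Leaf tuples only shrink along relations of the full tensor product. -/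
theorem sum_lam_le : ∀ {hs x}, tensorRel rS rT hs x →
    ((hs.map (lamT rS rT As Bs)).sum) ≤ lamT rS rT As Bs x := by
  intro hs x h
  induction h with
  | of fs e hgen =>
    rcases hgen with ⟨as, has, rfl⟩ | ⟨bs, hbs, rfl⟩
    · rw [sum_lam_map_left]
      exact mprod_le_left _ (sum_lseaf_le hSt (mval rS e.1 + 1) e.1 (by omega) as has)
    · rw [sum_lam_map_right]
      exact mprod_le_right _ (sum_lseaf_le hTt (mval rT e.2 + 1) e.2 (by omega) bs hbs)
  | refl e => simp
  | btrans p e hmid hblocks ihmid ihblocks =>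
    rw [sum_map_msum, Multiset.map_map]
    calc ((p.map fun q => (((q.1 : Multiset (A × B)).map (lamT rS rT As Bs)).sum)).sum)
        ≤ (p.map fun q : Multiset (A × B) × (A × B) => lamT rS rT As Bs q.2).sum :=
          sum_map_le_sum_map _ _ _ fun q hq => ihblocks q hq
      _ = ((p.map Prod.snd).map (lamT rS rT As Bs)).sum := by rw [Multiset.map_map]; rfl
      _ ≤ lamT rS rT As Bs e := ihmid

/-- Additivity of leaf tuples along relations of the reduced tensor product. -/
theorem sum_lam_eq : ∀ {hs x}, tensorRel (delStumps rS As) (delStumps rT Bs) hs x →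
    ((hs.map (lamT rS rT As Bs)).sum) = lamT rS rT As Bs x := by
  intro hs x h
  induction h with
  | of fs e hgen =>
    rcases hgen with ⟨as, has, rfl⟩ | ⟨bs, hbs, rfl⟩
    · rw [sum_lam_map_left, sum_lseaf_eq hSt has]; rfl
    · rw [sum_lam_map_right, sum_lseaf_eq hTt hbs]; rfl
  | refl e => simp
  | btrans p e hmid hblocks ihmid ihblocks =>
    rw [sum_map_msum, Multiset.map_map]
    rw [show ((fun s => ((Multiset.map (lamT rS rT As Bs) s).sum)) ∘ Prod.fst)
      = (fun q : Multiset (A × B) × (A × B) => (((q.1).map (lamT rS rT As Bs)).sum))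
      from rfl]
    rw [Multiset.map_congr rfl fun q hq => ihblocks q hq]
    rw [show (fun q : Multiset (A × B) × (A × B) => lamT rS rT As Bs q.2)
      = (lamT rS rT As Bs) ∘ Prod.snd from rfl, ← Multiset.map_map]
    exact ihmid

/-- If the `T`-side leaf tuple below `b` is empty, every tree relation
`as ≤ a` survives at level `b` in the reduced tensor product. -/
theorem tensor_left_of_zero {b : B} (hzb : delStumps rT Bs 0 b) :
    ∀ n a, mval rS a < n → ∀ as, rS as a →
      tensorRel (delStumps rS As) (delStumps rT Bs) (as.map fun a' => (a', b)) (a, b) := by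
  intro n
  induction n with
  | zero => intro a h; omega
  | succ N ih =>
    intro a ha as hg
    by_cases hgs : as = {a}
    · subst hgs
      rw [Multiset.map_singleton]
      exact GenRel.refl (a, b)
    · rcases hSt.2.2.2.1 a with hleaf | ⟨fs, hup⟩
      · exact absurd ⟨as, hg, hgs⟩ hleaf
      · obtain ⟨p, hsnd, hfst, hblocks⟩ := hup.2 as hg hgs
        by_cases hc : a ∈ As ∧ fs = 0
        · have hp0 : p = 0 := by
            rw [hc.2] at hsnd
            exact Multiset.eq_zero_of_forall_notMem fun q hq => by
              have := Multiset.mem_map_of_mem Prod.snd hq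
              rw [hsnd] at this; simp at this
          rw [hp0] at hfst
          simp at hfst
          rw [← hfst]
          rw [Multiset.map_zero]
          exact GenRel.of _ _ (Or.inr ⟨0, hzb, by simp⟩)
        · have hbase : tensorRel (delStumps rS As) (delStumps rT Bs)
              (fs.map fun a' => (a', b)) (a, b) :=
            GenRel.of _ _ (Or.inl ⟨fs, GenRel.of _ _ ⟨hup, hc⟩, rfl⟩)
          set P : Multiset (Multiset (A × B) × (A × B)) :=
            p.map fun q => ((q.1.map fun a' => (a', b)), (q.2, b)) with hP
          have hPsnd : P.map Prod.snd = fs.map fun a' => (a', b) := by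
            rw [hP, Multiset.map_map, ← hsnd, Multiset.map_map]
            rfl
          have hPfst : ((P.map Prod.fst).sum) = as.map fun a' => (a', b) := by
            rw [hP, Multiset.map_map, ← hfst, map_msum, Multiset.map_map]
            rfl
          have hb := GenRel.btrans (gen := tensorGen (delStumps rS As) (delStumps rT Bs))
            P (a, b) (by rw [hPsnd]; exact hbase) ?_
          · rwa [hPfst] at hb
          · intro q' hq'
            rw [hP] at hq'
            obtain ⟨q, hq, rfl⟩ := Multiset.mem_map.mp hq'
            classical
            have hq2 : q.2 ∈ fs := hsnd ▸ Multiset.mem_map_of_mem Prod.snd hq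
            exact ih q.2 (by have := mval_lt hSt hup hq2; omega) q.1 (hblocks q hq)

/-- Symmetric version of `tensor_left_of_zero`. -/
theorem tensor_right_of_zero {a : A} (hza : delStumps rS As 0 a) :
    ∀ n b, mval rT b < n → ∀ bs, rT bs b →
      tensorRel (delStumps rS As) (delStumps rT Bs) (bs.map fun b' => (a, b')) (a, b) := by
  intro n
  induction n with
  | zero => intro b h; omega
  | succ N ih =>
    intro b hb bs hg
    by_cases hgs : bs = {b}
    · subst hgs
      rw [Multiset.map_singleton]
      exact GenRel.refl (a, b)
    · rcases hTt.2.2.2.1 b with hleaf | ⟨fs, hup⟩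
      · exact absurd ⟨bs, hg, hgs⟩ hleaf
      · obtain ⟨p, hsnd, hfst, hblocks⟩ := hup.2 bs hg hgs
        by_cases hc : b ∈ Bs ∧ fs = 0
        · have hp0 : p = 0 := by
            rw [hc.2] at hsnd
            exact Multiset.eq_zero_of_forall_notMem fun q hq => by
              have := Multiset.mem_map_of_mem Prod.snd hq
              rw [hsnd] at this; simp at this
          rw [hp0] at hfst
          simp at hfst
          rw [← hfst]
          rw [Multiset.map_zero]
          exact GenRel.of _ _ (Or.inl ⟨0, hza, by simp⟩)
        · have hbase : tensorRel (delStumps rS As) (delStumps rT Bs)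
              (fs.map fun b' => (a, b')) (a, b) :=
            GenRel.of _ _ (Or.inr ⟨fs, GenRel.of _ _ ⟨hup, hc⟩, rfl⟩)
          set P : Multiset (Multiset (A × B) × (A × B)) :=
            p.map fun q => ((q.1.map fun b' => (a, b')), (a, q.2)) with hP
          have hPsnd : P.map Prod.snd = fs.map fun b' => (a, b') := by
            rw [hP, Multiset.map_map, ← hsnd, Multiset.map_map]
            rfl
          have hPfst : ((P.map Prod.fst).sum) = bs.map fun b' => (a, b') := by
            rw [hP, Multiset.map_map, ← hfst, map_msum, Multiset.map_map]
            rfl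
          have hb := GenRel.btrans (gen := tensorGen (delStumps rS As) (delStumps rT Bs))
            P (a, b) (by rw [hPsnd]; exact hbase) ?_
          · rwa [hPfst] at hb
          · intro q' hq'
            rw [hP] at hq'
            obtain ⟨q, hq, rfl⟩ := Multiset.mem_map.mp hq'
            classical
            have hq2 : q.2 ∈ fs := hsnd ▸ Multiset.mem_map_of_mem Prod.snd hq
            exact ih q.2 (by have := mval_lt hTt hup hq2; omega) q.1 (hblocks q hq)

/-- Key converse at the tensor level. -/
theorem tensor_del_of_sum_eq : ∀ {hs x}, tensorRel rS rT hs x →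
    ((hs.map (lamT rS rT As Bs)).sum) = lamT rS rT As Bs x →
    tensorRel (delStumps rS As) (delStumps rT Bs) hs x := by
  intro hs x h
  induction h with
  | refl e => intro _; exact GenRel.refl e
  | of fs e hgen =>
    intro heq
    rcases hgen with ⟨as, has, rfl⟩ | ⟨bs, hbs, rfl⟩
    · rw [sum_lam_map_left] at heq
      by_cases ht0 : lseaf rT Bs e.2 = 0
      · have hzb : delStumps rT Bs 0 e.2 := ht0 ▸ delStumps_lseaf hTt e.2
        exact tensor_left_of_zero hSt hTt hzb (mval rS e.1 + 1) e.1 (by omega) as has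
      · have hs_eq : (as.map (lseaf rS As)).sum = lseaf rS As e.1 :=
          mprod_cancel_left ht0 heq
        have hdel : delStumps rS As as e.1 :=
          del_of_sum_eq hSt (mval rS e.1 + 1) e.1 (by omega) as has hs_eq
        exact GenRel.of _ _ (Or.inl ⟨as, hdel, rfl⟩)
    · rw [sum_lam_map_right] at heq
      by_cases hs0 : lseaf rS As e.1 = 0
      · have hza : delStumps rS As 0 e.1 := hs0 ▸ delStumps_lseaf hSt e.1
        exact tensor_right_of_zero hSt hTt hza (mval rT e.2 + 1) e.2 (by omega) bs hbs
      · have hs_eq : (bs.map (lseaf rT Bs)).sum = lseaf rT Bs e.2 :=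
          mprod_cancel_right hs0 heq
        have hdel : delStumps rT Bs bs e.2 :=
          del_of_sum_eq hTt (mval rT e.2 + 1) e.2 (by omega) bs hbs hs_eq
        exact GenRel.of _ _ (Or.inr ⟨bs, hdel, rfl⟩)
  | btrans p e hmid hblocks ihmid ihblocks =>
    intro heq
    have e1 : (p.map fun q : Multiset (A × B) × (A × B) =>
        (((q.1).map (lamT rS rT As Bs)).sum)).sum = lamT rS rT As Bs e := by
      rw [← heq, sum_map_msum, Multiset.map_map]
      rfl
    have hle1 : ∀ q ∈ p, ((q.1 : Multiset (A × B)).map (lamT rS rT As Bs)).sum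
        ≤ lamT rS rT As Bs q.2 := fun q hq => sum_lam_le hSt hTt (hblocks q hq)
    have hle2 : (p.map fun q : Multiset (A × B) × (A × B) =>
        lamT rS rT As Bs q.2).sum ≤ lamT rS rT As Bs e := by
      have h' : (p.map fun q : Multiset (A × B) × (A × B) => lamT rS rT As Bs q.2).sum
          = ((p.map Prod.snd).map (lamT rS rT As Bs)).sum := by
        rw [Multiset.map_map]; rfl
      rw [h']
      exact sum_lam_le hSt hTt hmid
    have hle3 := sum_map_le_sum_map p
      (fun q : Multiset (A × B) × (A × B) => (((q.1).map (lamT rS rT As Bs)).sum))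
      (fun q : Multiset (A × B) × (A × B) => lamT rS rT As Bs q.2) hle1
    have e2 : (p.map fun q : Multiset (A × B) × (A × B) =>
        lamT rS rT As Bs q.2).sum = lamT rS rT As Bs e :=
      le_antisymm hle2 (e1 ▸ hle3)
    have e3 := e1.trans e2.symm
    have hpt := eq_of_sum_map_eq hle1 e3
    have hmid' : tensorRel (delStumps rS As) (delStumps rT Bs) (p.map Prod.snd) e := by
      apply ihmid
      rw [Multiset.map_map]
      exact e2
    exact GenRel.btrans p e hmid' fun q hq => ihblocks q hq (hpt q hq)

end TensorLemmas

end Stmt18Aux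

/-- For subsets `A`, `B` of the stumps of `S`, `T`, a broad
relation `f₁ ⋯ fₖ ≤ e` of `S ⊗ T` holds in `(S − v_A) ⊗ (T − v_B)` iff
`e^{λ,(S−v_A)⊗(T−v_B)} ≤ f₁ ⋯ fₖ`. -/
theorem stmt18 {A B : Type u} (rS : Rel A) (rT : Rel B)
    (hS : IsTree rS) (hT : IsTree rT)
    (As : Set A) (Bs : Set B)
    (hAs : ∀ a ∈ As, IsStump rS a) (hBs : ∀ b ∈ Bs, IsStump rT b)
    (e : A × B) (lamE : Multiset (A × B))
    (hlam : tensorRel (delStumps rS As) (delStumps rT Bs) lamE e ∧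
      ∀ gs, tensorRel (delStumps rS As) (delStumps rT Bs) gs e →
        tupleLE (tensorRel (delStumps rS As) (delStumps rT Bs)) lamE gs)
    (fs : Multiset (A × B)) (hfs : tensorRel rS rT fs e) :
    tensorRel (delStumps rS As) (delStumps rT Bs) fs e ↔
      tupleLE (tensorRel (delStumps rS As) (delStumps rT Bs)) lamE fs := by
  constructor
  · intro h
    exact hlam.2 fs h
  · rintro ⟨p, hsnd, hfst, hblocks⟩
    have hEe : ((lamE.map (lamT rS rT As Bs)).sum) = lamT rS rT As Bs e :=
      sum_lam_eq hS hT hlam.1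
    have hfse : ((fs.map (lamT rS rT As Bs)).sum) = lamT rS rT As Bs e := by
      rw [← hsnd, Multiset.map_map]
      have hcg : ∀ q ∈ p, ((lamT rS rT As Bs) ∘ Prod.snd) q
          = (((q.1 : Multiset (A × B)).map (lamT rS rT As Bs)).sum) :=
        fun q hq => (sum_lam_eq hS hT (hblocks q hq)).symm
      rw [Multiset.map_congr rfl hcg]
      rw [show (p.map fun q : Multiset (A × B) × (A × B) =>
          (((q.1).map (lamT rS rT As Bs)).sum))
        = ((p.map Prod.fst).map fun s => ((s.map (lamT rS rT As Bs)).sum)) from by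
          rw [Multiset.map_map]; rfl]
      rw [← sum_map_msum, hfst, hEe]
    exact tensor_del_of_sum_eq hS hT hfs hfse

end BroadPaper
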